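/- If a string P of length m can be transformed into a string P' of length ℓ using at most k single-character insert, delete, and substitution operations (i.e., the edit distance between P and P' is at most k), then P' can be partitioned into at most 2k+1 contiguous nonempty substrings, each of which occurs as a substring of P, provided every symbol of P' occurs somewhere in P. -/

import Mathlib

namespace Levenshtein

/-- A cost function for Levenshtein distance. -/
structure Cost (α β δ : Type*) where
  /-- Cost to delete an element from a list. -/
  delete : α → δ
  /-- Cost in insert an element into a list. -/
  insert : β → δ
  /-- Cost to substitute one element for another in a list. -/
  substitute : α → β → δ

/-- The default cost structure, for which all operations cost `1`. -/
def defaultCost {α : Type*} [DecidableEq α] : Cost α α ℕ where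
  delete _ := 1
  insert _ := 1
  substitute a b := if a = b then 0 else 1

end Levenshtein

/-- The Levenshtein distance with cost structure `C`, by the recurrence of the old Mathlib
definition (`levenshtein_nil_nil`, `levenshtein_nil_cons`, `levenshtein_cons_nil`,
`levenshtein_cons_cons`). -/
def levenshtein {α β δ : Type*} [AddZeroClass δ] [Min δ] (C : Levenshtein.Cost α β δ) :
    List α → List β → δ
  | [], [] => 0
  | [], y :: ys => C.insert y + levenshtein C [] ys
  | x :: xs, [] => C.delete x + levenshtein C xs []
  | x :: xs, y :: ys =>
    min (C.delete x + levenshtein C xs (y :: ys))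
      (min (C.insert y + levenshtein C (x :: xs) ys) (C.substitute x y + levenshtein C xs ys))

namespace Levenshtein

@[simp] theorem defaultCost_delete {α : Type*} [DecidableEq α] (a : α) :
    (defaultCost : Cost α α ℕ).delete a = 1 := rfl

@[simp] theorem defaultCost_insert {α : Type*} [DecidableEq α] (a : α) :
    (defaultCost : Cost α α ℕ).insert a = 1 := rfl

@[simp] theorem defaultCost_substitute {α : Type*} [DecidableEq α] (a b : α) :
    (defaultCost : Cost α α ℕ).substitute a b = if a = b then 0 else 1 := rfl

end Levenshtein

theorem levenshtein_nil_nil {α β δ : Type*} [AddZeroClass δ] [Min δ]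
    (C : Levenshtein.Cost α β δ) : levenshtein C [] [] = 0 := by
  rw [levenshtein]

theorem levenshtein_nil_cons {α β δ : Type*} [AddZeroClass δ] [Min δ]
    (C : Levenshtein.Cost α β δ) (y : β) (ys : List β) :
    levenshtein C [] (y :: ys) = C.insert y + levenshtein C [] ys := by
  rw [levenshtein]

theorem levenshtein_cons_cons {α β δ : Type*} [AddZeroClass δ] [Min δ]
    (C : Levenshtein.Cost α β δ) (x : α) (xs : List α) (y : β) (ys : List β) :
    levenshtein C (x :: xs) (y :: ys) =
      min (C.delete x + levenshtein C xs (y :: ys))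
        (min (C.insert y + levenshtein C (x :: xs) ys) (C.substitute x y + levenshtein C xs ys)) := by
  rw [levenshtein]

private theorem lev_nil_eq {α : Type*} [DecidableEq α] (P' : List α) :
    levenshtein Levenshtein.defaultCost ([] : List α) P' = P'.length := by
  induction P' with
  | nil => simp [levenshtein_nil_nil]
  | cons y ys ih => rw [levenshtein_nil_cons, ih]; simp [Nat.add_comm]

private theorem aux_rep {α : Type*} [DecidableEq α] (P : List α) :
    ∀ Q P' : List α, ∀ k : ℕ,
      levenshtein Levenshtein.defaultCost Q P' ≤ k →
      (∀ a ∈ P', [a] <:+: P) → Q <:+: P →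
      ∃ L : List (List α), L.flatten = P' ∧ (∀ B ∈ L, B ≠ [] ∧ B <:+: P) ∧
        (L.length ≤ 2 * k ∨ (L.length ≤ 2 * k + 1 ∧ ∃ B T, L = B :: T ∧ B <+: Q)) := by
  intro Q
  induction Q with
  | nil =>
    intro P' k h hP' _
    rw [lev_nil_eq] at h
    refine ⟨P'.map (fun a => [a]), ?_, ?_, Or.inl ?_⟩
    · clear h hP'; induction P' <;> simp_all
    · intro B hB
      simp only [List.mem_map] at hB
      obtain ⟨a, ha, rfl⟩ := hB
      exact ⟨by simp, hP' a ha⟩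
    · simpa using h.trans (by omega)
  | cons x xs ihQ =>
    intro P'
    induction P' with
    | nil =>
      intro k h _ _
      exact ⟨[], rfl, by simp, Or.inl (by simp)⟩
    | cons y ys ihP =>
      intro k h hP' hQ
      have hxs : xs <:+: P := ((List.suffix_cons x xs).isInfix).trans hQ
      rw [levenshtein_cons_cons] at h
      rcases min_le_iff.mp h with hdel | h2
      · -- delete: 1 + lev xs (y::ys) ≤ k
        simp only [Levenshtein.defaultCost_delete] at hdel
        obtain ⟨k', rfl⟩ : ∃ k', k = k' + 1 := ⟨k - 1, by omega⟩
        obtain ⟨L, hjoin, hblocks, hlen⟩ :=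
          ihQ (y :: ys) k' (by omega) hP' hxs
        refine ⟨L, hjoin, hblocks, Or.inl ?_⟩
        rcases hlen with h | ⟨h, _⟩ <;> omega
      rcases min_le_iff.mp h2 with hins | hsub
      · -- insert: 1 + lev (x::xs) ys ≤ k
        simp only [Levenshtein.defaultCost_insert] at hins
        obtain ⟨k', rfl⟩ : ∃ k', k = k' + 1 := ⟨k - 1, by omega⟩
        obtain ⟨L, hjoin, hblocks, hlen⟩ :=
          ihP k' (by omega) (fun a ha => hP' a (List.mem_cons_of_mem _ ha)) hQ
        refine ⟨[y] :: L, by simp [hjoin], ?_, Or.inl ?_⟩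
        · intro B hB
          rcases List.mem_cons.mp hB with rfl | hB
          · exact ⟨by simp, hP' y (by simp)⟩
          · exact hblocks B hB
        · rcases hlen with h | ⟨h, _⟩ <;> simp <;> omega
      · -- substitute
        simp only [Levenshtein.defaultCost_substitute] at hsub
        by_cases hxy : x = y
        · subst hxy
          rw [if_pos rfl, Nat.zero_add] at hsub
          obtain ⟨L, hjoin, hblocks, hlen⟩ :=
            ihQ ys k hsub (fun a ha => hP' a (List.mem_cons_of_mem _ ha)) hxs
          rcases hlen with hlen | ⟨hlen, B, T, rfl, hpre⟩
          · refine ⟨[x] :: L, by simp [hjoin], ?_, Or.inr ⟨by simp; omega,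
              [x], L, rfl, by simp⟩⟩
            intro B hB
            rcases List.mem_cons.mp hB with rfl | hB
            · exact ⟨by simp, hP' x (by simp)⟩
            · exact hblocks B hB
          · refine ⟨(x :: B) :: T, by simpa using hjoin, ?_, Or.inr ⟨by simpa using hlen,
              x :: B, T, rfl, List.cons_prefix_cons.mpr ⟨rfl, hpre⟩⟩⟩
            intro B' hB'
            rcases List.mem_cons.mp hB' with rfl | hB'
            · exact ⟨by simp, ((List.cons_prefix_cons.mpr ⟨rfl, hpre⟩).isInfix).trans hQ⟩
            · exact hblocks B' (List.mem_cons_of_mem _ hB')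
        · rw [if_neg hxy] at hsub
          obtain ⟨k', rfl⟩ : ∃ k', k = k' + 1 := ⟨k - 1, by omega⟩
          obtain ⟨L, hjoin, hblocks, hlen⟩ :=
            ihQ ys k' (by omega) (fun a ha => hP' a (List.mem_cons_of_mem _ ha)) hxs
          refine ⟨[y] :: L, by simp [hjoin], ?_, Or.inl ?_⟩
          · intro B hB
            rcases List.mem_cons.mp hB with rfl | hB
            · exact ⟨by simp, hP' y (by simp)⟩
            · exact hblocks B hB
          · rcases hlen with h | ⟨h, _⟩ <;> simp <;> omega

theorem p_representation_of_bounded_edit_distance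
    {α : Type*} [DecidableEq α] (k : ℕ) (P P' : List α)
    (hdist : levenshtein Levenshtein.defaultCost P P' ≤ k)
    (hocc : ∀ a ∈ P', a ∈ P) :
    ∃ L : List (List α), L.flatten = P' ∧ L.length ≤ 2 * k + 1 ∧
      ∀ B ∈ L, B ≠ [] ∧ B <:+: P := by
  obtain ⟨L, hjoin, hblocks, hlen⟩ := aux_rep P P P' k hdist
    (fun a ha => by
      obtain ⟨s, t, rfl⟩ := List.append_of_mem (hocc a ha)
      exact ⟨s, t, by simp⟩)
    (List.infix_refl P)
  refine ⟨L, hjoin, ?_, hblocks⟩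
  rcases hlen with h | ⟨h, _⟩ <;> omega
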